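/- Let r > 0 and m > 0 be constants and let φ, β, V_a, γ, θ, F_L, F_D, F_p : ℝ → ℝ be functions (φ, β twice differentiable; V_a, γ differentiable) with cos β(t) ≠ 0 and V_a(t) ≠ 0 for all t, satisfying: (i) the kinematics r cos β · φ̇ = V_a cos γ and r β̇ = V_a sin γ; (ii) the tangential force balances m r cos β · φ̈ = −F_L sin γ − F_D cos γ + F_p cos θ + 2 m r φ̇ β̇ sin β and m r β̈ = F_L cos γ − F_D sin γ + F_p sin θ − m g cos β − m r φ̇² cos β sin β; and (iii) θ = γ + α where α : ℝ → ℝ is the angle-of-attack. Then the flight-path angle satisfies m V_a γ̇ = F_L + F_p sin α − m g cos β cos γ − (m V_a²/r) tan β cos γ. -/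

import Mathlib

/-- Given the kinematics of circular tethered flight and the tangential force balances
(Newton's second law projected on `e_φ` and `e_β`, with Coriolis/centrifugal terms),
with pitch `θ = γ + α` and nonvanishing airspeed, the flight-path angle satisfies
`m V_a γ̇ = F_L + F_p sin α − m g cos β cos γ − (m V_a²/r) tan β cos γ`. -/
theorem tethered_flight_path_dynamics
    (r m g : ℝ) (hr : 0 < r) (hm : 0 < m) (hg : 0 < g)
    (φ β Va γ θ FL FD Fp α : ℝ → ℝ)
    (hφ : Differentiable ℝ φ) (hφ' : Differentiable ℝ (deriv φ))
    (hβ : Differentiable ℝ β) (hβ' : Differentiable ℝ (deriv β))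
    (hVa : Differentiable ℝ Va) (hγ : Differentiable ℝ γ)
    (hcos : ∀ t, Real.cos (β t) ≠ 0)
    (hVa0 : ∀ t, Va t ≠ 0)
    (hkin1 : ∀ t, r * Real.cos (β t) * deriv φ t = Va t * Real.cos (γ t))
    (hkin2 : ∀ t, r * deriv β t = Va t * Real.sin (γ t))
    (hforce1 : ∀ t, m * r * Real.cos (β t) * deriv (deriv φ) t =
        -FL t * Real.sin (γ t) - FD t * Real.cos (γ t) + Fp t * Real.cos (θ t)
          + 2 * m * r * deriv φ t * deriv β t * Real.sin (β t))
    (hforce2 : ∀ t, m * r * deriv (deriv β) t =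
        FL t * Real.cos (γ t) - FD t * Real.sin (γ t) + Fp t * Real.sin (θ t)
          - m * g * Real.cos (β t)
          - m * r * (deriv φ t) ^ 2 * Real.cos (β t) * Real.sin (β t))
    (hθ : ∀ t, θ t = γ t + α t) :
    ∀ t, m * Va t * deriv γ t =
        FL t + Fp t * Real.sin (α t) - m * g * Real.cos (β t) * Real.cos (γ t)
          - m * (Va t) ^ 2 / r * Real.tan (β t) * Real.cos (γ t) := by
  intro t
  have hβd : HasDerivAt β (deriv β t) t := (hβ t).hasDerivAt
  have hφd' : HasDerivAt (deriv φ) (deriv (deriv φ) t) t := (hφ' t).hasDerivAt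
  have hβd' : HasDerivAt (deriv β) (deriv (deriv β) t) t := (hβ' t).hasDerivAt
  have hVad : HasDerivAt Va (deriv Va t) t := (hVa t).hasDerivAt
  have hγd : HasDerivAt γ (deriv γ t) t := (hγ t).hasDerivAt
  have hcosβ : HasDerivAt (fun s => Real.cos (β s)) (-Real.sin (β t) * deriv β t) t :=
    (Real.hasDerivAt_cos (β t)).comp t hβd
  have hcosγ : HasDerivAt (fun s => Real.cos (γ s)) (-Real.sin (γ t) * deriv γ t) t :=
    (Real.hasDerivAt_cos (γ t)).comp t hγd
  have hsinγ : HasDerivAt (fun s => Real.sin (γ s)) (Real.cos (γ t) * deriv γ t) t :=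
    (Real.hasDerivAt_sin (γ t)).comp t hγd
  have hL1 : HasDerivAt (fun s => r * Real.cos (β s) * deriv φ s)
      (r * (-Real.sin (β t) * deriv β t) * deriv φ t
        + r * Real.cos (β t) * deriv (deriv φ) t) t :=
    (hcosβ.const_mul r).mul hφd'
  have hR1 : HasDerivAt (fun s => Va s * Real.cos (γ s))
      (deriv Va t * Real.cos (γ t) + Va t * (-Real.sin (γ t) * deriv γ t)) t :=
    hVad.mul hcosγ
  have hL2 : HasDerivAt (fun s => r * deriv β s) (r * deriv (deriv β) t) t :=
    hβd'.const_mul r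
  have hR2 : HasDerivAt (fun s => Va s * Real.sin (γ s))
      (deriv Va t * Real.sin (γ t) + Va t * (Real.cos (γ t) * deriv γ t)) t :=
    hVad.mul hsinγ
  have hfun1 : (fun s => r * Real.cos (β s) * deriv φ s)
      = fun s => Va s * Real.cos (γ s) := funext hkin1
  have hfun2 : (fun s => r * deriv β s) = fun s => Va s * Real.sin (γ s) := funext hkin2
  have D1 : r * (-Real.sin (β t) * deriv β t) * deriv φ t
      + r * Real.cos (β t) * deriv (deriv φ) t
      = deriv Va t * Real.cos (γ t) + Va t * (-Real.sin (γ t) * deriv γ t) := by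
    have h1 := hL1.deriv
    rw [hfun1] at h1
    rw [← h1, hR1.deriv]
  have D2 : r * deriv (deriv β) t
      = deriv Va t * Real.sin (γ t) + Va t * (Real.cos (γ t) * deriv γ t) := by
    have h1 := hL2.deriv
    rw [hfun2] at h1
    rw [← h1, hR2.deriv]
  have F1 := hforce1 t
  have F2 := hforce2 t
  have E1 := hkin1 t
  have E2 := hkin2 t
  rw [hθ t, Real.cos_add] at F1
  rw [hθ t, Real.sin_add] at F2
  have P : Real.sin (γ t) ^ 2 + Real.cos (γ t) ^ 2 = 1 := Real.sin_sq_add_cos_sq _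
  have key : m * Va t * deriv γ t * (r * Real.cos (β t))
      = (FL t + Fp t * Real.sin (α t) - m * g * Real.cos (β t) * Real.cos (γ t))
          * (r * Real.cos (β t))
        - m * (Va t) ^ 2 * Real.sin (β t) * Real.cos (γ t) := by
    linear_combination (r * Real.cos (β t) * Real.cos (γ t)) * F2
      - (m * r * Real.cos (β t) * Real.cos (γ t)) * D2
      - (r * Real.cos (β t) * Real.sin (γ t)) * F1
      + (m * r * Real.cos (β t) * Real.sin (γ t)) * D1
      - (m * Real.sin (β t) * Real.cos (γ t) * (r * Real.cos (β t) * deriv φ t + Va t * Real.cos (γ t))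
          + m * Real.sin (β t) * Real.sin (γ t) * (r * deriv β t)) * E1
      - (m * Real.sin (β t) * Real.sin (γ t) * Va t * Real.cos (γ t)) * E2
      + ((FL t + Fp t * Real.sin (α t) - m * Va t * deriv γ t) * (r * Real.cos (β t))
          - m * (Va t) ^ 2 * Real.sin (β t) * Real.cos (γ t)) * P
  have hrc : r * Real.cos (β t) ≠ 0 := mul_ne_zero hr.ne' (hcos t)
  rw [Real.tan_eq_sin_div_cos]
  have hc := hcos t
  field_simp
  linear_combination key
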